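/- Let M, n, p be positive natural numbers and let A be a real M×n matrix and B a real M×p matrix. If the matrix A Aᵀ − B Bᵀ is positive semidefinite, then there exists a real n×p matrix T such that A T = B and the matrix 1 − Tᵀ T is positive semidefinite (i.e., T is a contraction). -/

import Mathlib

open Matrix
open scoped RealInnerProductSpace

private lemma EuclideanSpace.inner_piLp_equiv_symm {k : ℕ} (x y : Fin k → ℝ) :
    ⟪(WithLp.equiv 2 (Fin k → ℝ)).symm x, (WithLp.equiv 2 (Fin k → ℝ)).symm y⟫ =
      dotProduct y (star x) := rfl

private lemma Matrix.toEuclideanLin_apply_piLp_equiv_symm {a b : ℕ} (N : Matrix (Fin a) (Fin b) ℝ)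
    (v : Fin b → ℝ) :
    Matrix.toEuclideanLin N ((WithLp.equiv 2 (Fin b → ℝ)).symm v) =
      (WithLp.equiv 2 (Fin a → ℝ)).symm (N *ᵥ v) := rfl

private lemma dot_self_eq_norm_sq' {k : ℕ} (x : Fin k → ℝ) :
    x ⬝ᵥ x = ‖(WithLp.equiv 2 (Fin k → ℝ)).symm x‖ ^ 2 := by
  rw [← real_inner_self_eq_norm_sq, EuclideanSpace.inner_piLp_equiv_symm]
  simp

/-- Gram-domination lemma: if `A Aᵀ - B Bᵀ` is positive semidefinite, then the rows of `B`
are images of the rows of `A` under a common linear contraction `T`. -/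
theorem gram_domination_contraction
    (M n p : ℕ) (hM : 0 < M) (hn : 0 < n) (hp : 0 < p)
    (A : Matrix (Fin M) (Fin n) ℝ) (B : Matrix (Fin M) (Fin p) ℝ)
    (h : (A * Aᵀ - B * Bᵀ).PosSemidef) :
    ∃ T : Matrix (Fin n) (Fin p) ℝ, A * T = B ∧ (1 - Tᵀ * T).PosSemidef := by
  classical
  set f : EuclideanSpace ℝ (Fin M) →ₗ[ℝ] EuclideanSpace ℝ (Fin n) :=
    Matrix.toEuclideanLin Aᵀ with hfdef
  set g : EuclideanSpace ℝ (Fin M) →ₗ[ℝ] EuclideanSpace ℝ (Fin p) :=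
    Matrix.toEuclideanLin Bᵀ with hgdef
  -- key norm inequality
  have key : ∀ v : EuclideanSpace ℝ (Fin M), ‖g v‖ ≤ ‖f v‖ := by
    intro v
    set w : Fin M → ℝ := (WithLp.equiv 2 (Fin M → ℝ)) v with hw
    have hv : v = (WithLp.equiv 2 (Fin M → ℝ)).symm w := ((WithLp.equiv 2 _).symm_apply_apply v).symm
    have h2 := h.dotProduct_mulVec_nonneg w
    rw [star_trivial, sub_mulVec, dotProduct_sub] at h2
    have eA : w ⬝ᵥ ((A * Aᵀ) *ᵥ w) = (Aᵀ *ᵥ w) ⬝ᵥ (Aᵀ *ᵥ w) := by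
      rw [← mulVec_mulVec, dotProduct_mulVec, ← mulVec_transpose]
    have eB : w ⬝ᵥ ((B * Bᵀ) *ᵥ w) = (Bᵀ *ᵥ w) ⬝ᵥ (Bᵀ *ᵥ w) := by
      rw [← mulVec_mulVec, dotProduct_mulVec, ← mulVec_transpose]
    rw [eA, eB, dot_self_eq_norm_sq', dot_self_eq_norm_sq'] at h2
    rw [hv, hfdef, hgdef, Matrix.toEuclideanLin_apply_piLp_equiv_symm,
      Matrix.toEuclideanLin_apply_piLp_equiv_symm]
    have hsq : ‖(WithLp.equiv 2 (Fin p → ℝ)).symm (Bᵀ *ᵥ w)‖ ^ 2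
        ≤ ‖(WithLp.equiv 2 (Fin n → ℝ)).symm (Aᵀ *ᵥ w)‖ ^ 2 := by linarith
    calc ‖(WithLp.equiv 2 (Fin p → ℝ)).symm (Bᵀ *ᵥ w)‖
        = Real.sqrt (‖(WithLp.equiv 2 (Fin p → ℝ)).symm (Bᵀ *ᵥ w)‖ ^ 2) :=
          (Real.sqrt_sq (norm_nonneg _)).symm
      _ ≤ Real.sqrt (‖(WithLp.equiv 2 (Fin n → ℝ)).symm (Aᵀ *ᵥ w)‖ ^ 2) := Real.sqrt_le_sqrt hsq
      _ = _ := Real.sqrt_sq (norm_nonneg _)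
  have hle : LinearMap.ker f ≤ LinearMap.ker g := by
    intro v hv
    rw [LinearMap.mem_ker] at hv ⊢
    have := key v
    rw [hv, norm_zero] at this
    exact norm_le_zero_iff.mp this
  set W : Submodule ℝ (EuclideanSpace ℝ (Fin n)) := LinearMap.range f with hWdef
  set h0 : W →ₗ[ℝ] EuclideanSpace ℝ (Fin p) :=
    ((LinearMap.ker f).liftQ g hle).comp f.quotKerEquivRange.symm.toLinearMap with hh0
  have h0_apply : ∀ v, h0 ⟨f v, LinearMap.mem_range_self f v⟩ = g v := by
    intro v
    show ((LinearMap.ker f).liftQ g hle) (f.quotKerEquivRange.symm ⟨f v, _⟩) = g v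
    rw [LinearMap.quotKerEquivRange_symm_apply_image]
    simp
  have h0_norm : ∀ w : W, ‖h0 w‖ ≤ ‖(w : EuclideanSpace ℝ (Fin n))‖ := by
    rintro ⟨w, hw⟩
    obtain ⟨v, rfl⟩ := hw
    rw [show (⟨f v, ⟨v, rfl⟩⟩ : W) = ⟨f v, LinearMap.mem_range_self f v⟩ from rfl, h0_apply]
    exact key v
  set C : EuclideanSpace ℝ (Fin n) →ₗ[ℝ] EuclideanSpace ℝ (Fin p) :=
    h0.comp (W.orthogonalProjectionOnto).toLinearMap with hCdef
  have hC1 : ∀ v, C (f v) = g v := by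
    intro v
    have hproj : W.orthogonalProjectionOnto (f v) = ⟨f v, LinearMap.mem_range_self f v⟩ := by
      exact Submodule.orthogonalProjectionOnto_mem_subspace_eq_self (⟨f v, LinearMap.mem_range_self f v⟩ : W)
    show h0 (W.orthogonalProjectionOnto (f v)) = g v
    rw [hproj, h0_apply]
  have hC2 : ∀ x, ‖C x‖ ≤ ‖x‖ := by
    intro x
    have h1 : ‖C x‖ ≤ ‖(W.orthogonalProjectionOnto x : EuclideanSpace ℝ (Fin n))‖ :=
      h0_norm (W.orthogonalProjectionOnto x)
    have h2 : ‖W.orthogonalProjectionOnto x‖ ≤ ‖x‖ := by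
      calc ‖W.orthogonalProjectionOnto x‖ ≤ ‖W.orthogonalProjectionOnto‖ * ‖x‖ :=
            (W.orthogonalProjectionOnto).le_opNorm x
        _ ≤ 1 * ‖x‖ := mul_le_mul_of_nonneg_right (Submodule.orthogonalProjectionOnto_norm_le W) (norm_nonneg x)
        _ = ‖x‖ := one_mul _
    exact h1.trans h2
  set Cm : Matrix (Fin p) (Fin n) ℝ := Matrix.toEuclideanLin.symm C with hCm
  have hCmC : Matrix.toEuclideanLin Cm = C := Matrix.toEuclideanLin.apply_symm_apply C
  have hmul : Cm * Aᵀ = Bᵀ := by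
    apply Matrix.toEuclideanLin.injective
    apply LinearMap.ext
    intro v
    set w : Fin M → ℝ := (WithLp.equiv 2 (Fin M → ℝ)) v with hw
    have hv : v = (WithLp.equiv 2 (Fin M → ℝ)).symm w := ((WithLp.equiv 2 _).symm_apply_apply v).symm
    have hfv : f v = (WithLp.equiv 2 (Fin n → ℝ)).symm (Aᵀ *ᵥ w) := by
      rw [hv, hfdef]; exact Matrix.toEuclideanLin_apply_piLp_equiv_symm _ _
    have hgv : g v = (WithLp.equiv 2 (Fin p → ℝ)).symm (Bᵀ *ᵥ w) := by
      rw [hv, hgdef]; exact Matrix.toEuclideanLin_apply_piLp_equiv_symm _ _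
    have lhs : Matrix.toEuclideanLin (Cm * Aᵀ) v
        = (WithLp.equiv 2 (Fin p → ℝ)).symm ((Cm * Aᵀ) *ᵥ w) := by
      rw [hv]; exact Matrix.toEuclideanLin_apply_piLp_equiv_symm _ _
    rw [lhs, ← mulVec_mulVec, ← Matrix.toEuclideanLin_apply_piLp_equiv_symm Cm (Aᵀ *ᵥ w),
      ← hfv, hCmC, hC1, hgv]
  have hadj : Matrix.toEuclideanLin Cmᵀ = LinearMap.adjoint C := by
    have hct : Cmᴴ = Cmᵀ := by ext i j; simp [Matrix.conjTranspose_apply]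
    rw [← hct, Matrix.toEuclideanLin_conjTranspose_eq_adjoint, hCmC]
  have hD : ∀ y : EuclideanSpace ℝ (Fin p), ‖(LinearMap.adjoint C) y‖ ≤ ‖y‖ := by
    intro y
    set u : EuclideanSpace ℝ (Fin n) := (LinearMap.adjoint C) y with hu
    rcases eq_or_lt_of_le (norm_nonneg u) with h0u | h0u
    · rw [← h0u]; exact norm_nonneg y
    · have h1 : ‖u‖ ^ 2 = ⟪u, u⟫ := (real_inner_self_eq_norm_sq u).symm
      have h2 : ⟪u, u⟫ = ⟪y, C u⟫ := by rw [hu, LinearMap.adjoint_inner_left]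
      have h3 : ⟪y, C u⟫ ≤ ‖y‖ * ‖C u‖ := real_inner_le_norm _ _
      have h4 : ‖C u‖ ≤ ‖u‖ := hC2 u
      have h5 : ‖u‖ * ‖u‖ ≤ ‖y‖ * ‖u‖ := by
        calc ‖u‖ * ‖u‖ = ‖u‖ ^ 2 := (sq ‖u‖).symm
          _ = ⟪u, u⟫ := h1
          _ = ⟪y, C u⟫ := h2
          _ ≤ ‖y‖ * ‖C u‖ := h3
          _ ≤ ‖y‖ * ‖u‖ := mul_le_mul_of_nonneg_left h4 (norm_nonneg y)
      exact le_of_mul_le_mul_right h5 h0u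
  refine ⟨Cmᵀ, ?_, ?_⟩
  · have := congrArg Matrix.transpose hmul
    rwa [Matrix.transpose_mul, Matrix.transpose_transpose, Matrix.transpose_transpose] at this
  · rw [Matrix.transpose_transpose]
    refine Matrix.PosSemidef.of_dotProduct_mulVec_nonneg ?_ ?_
    · refine Matrix.IsHermitian.sub Matrix.isHermitian_one ?_
      have hct : Cmᴴ = Cmᵀ := by ext i j; simp [Matrix.conjTranspose_apply]
      rw [← hct]
      exact Matrix.isHermitian_mul_conjTranspose_self Cm
    · intro x
      rw [star_trivial, sub_mulVec, one_mulVec, dotProduct_sub]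
      have e1 : x ⬝ᵥ ((Cm * Cmᵀ) *ᵥ x) = (Cmᵀ *ᵥ x) ⬝ᵥ (Cmᵀ *ᵥ x) := by
        rw [← mulVec_mulVec, dotProduct_mulVec, ← mulVec_transpose]
      have e2 : (Cmᵀ *ᵥ x) ⬝ᵥ (Cmᵀ *ᵥ x)
          = ‖Matrix.toEuclideanLin Cmᵀ ((WithLp.equiv 2 (Fin p → ℝ)).symm x)‖ ^ 2 := by
        rw [dot_self_eq_norm_sq', Matrix.toEuclideanLin_apply_piLp_equiv_symm]
      have e3 : x ⬝ᵥ x = ‖(WithLp.equiv 2 (Fin p → ℝ)).symm x‖ ^ 2 := dot_self_eq_norm_sq' x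
      have e4 : ‖Matrix.toEuclideanLin Cmᵀ ((WithLp.equiv 2 (Fin p → ℝ)).symm x)‖
          ≤ ‖(WithLp.equiv 2 (Fin p → ℝ)).symm x‖ := by
        rw [hadj]; exact hD _
      rw [e1, e2, e3, sub_nonneg]
      exact pow_le_pow_left₀ (norm_nonneg _) e4 2
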